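/- Let K = F_2, k ≥ 1, and let A be a connected graded K-algebra with A_n = 0 for all n ≥ 3, with a basis {a_1, …, a_{2k+1}} of A_1 and a basis {e} of A_2, whose multiplication on basis elements is given by a_1·a_1 = e, a_{2l}·a_{2l+1} = a_{2l+1}·a_{2l} = e for 1 ≤ l ≤ k, and a_i·a_j = 0 for all other pairs (i, j). (A is the mod-2 cohomology algebra of a Demushkin pro-2 group on 2k+1 generators with invariant q = 2, with the basis of Serre.) Define σ(1) = 1, σ(i) = i + 1 for i even, and σ(i) = i − 1 for odd i > 1. Then: (i) for every i, the colon ideal (0) : a_i equals the left ideal of A generated by { a_j : j ≠ σ(i) }; (ii) for every nonempty subset Y ⊆ {a_1, …, a_{2k+1}} and every a_i ∉ Y, the colon ideal (Y) : a_i equals the augmentation ideal A_+, which is the left ideal generated by {a_1, …, a_{2k+1}}. In particular, A is strongly Koszul with respect to {a_1, …, a_{2k+1}}. -/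
import Mathlib


/-- The colon ideal `I : x = {a | a * x ∈ I}` of a left ideal `I` by an element `x`. -/
def colonIdeal {A : Type*} [Ring A] (I : Ideal A) (x : A) : Ideal A :=
  Submodule.comap (LinearMap.toSpanSingleton A A x) I

/-- The augmentation ideal `A_+` of a connected graded algebra. -/
def augIdeal {K A : Type*} [Field K] [Ring A] [Algebra K A]
    (𝒜 : ℕ → Submodule K A) : Ideal A :=
  Ideal.span (⋃ n : ℕ, ((𝒜 (n + 1) : Submodule K A) : Set A))

/-- `A` is strongly Koszul with respect to a set `X` of (homogeneous) generators of the
augmentation ideal `P`: `X` generates `P`, no proper subset of `X` generates `P`, and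
for every `Y ⊊ X` and `x ∈ X \ Y` the colon ideal `(Y) : x` is generated by a subset of
`X`. -/
def StronglyKoszulWrt {A : Type*} [Ring A] (P : Ideal A) (X : Set A) : Prop :=
  Ideal.span X = P ∧ (∀ Y ⊂ X, Ideal.span Y ≠ P) ∧
    ∀ Y ⊂ X, ∀ z ∈ X \ Y, ∃ Z ⊆ X, colonIdeal (Ideal.span Y) z = Ideal.span Z

/-- The pairing involution of Serre's basis, in 0-based indexing:
`σ(0) = 0`, odd index ↦ index + 1, even index `> 0` ↦ index − 1
(1-based: `σ(1) = 1`, `σ(i) = i + 1` for even `i`, `σ(i) = i − 1` for odd `i > 1`). -/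
def sigma19 (j : ℕ) : ℕ := if j = 0 then 0 else if Odd j then j + 1 else j - 1

lemma sigma19_iff (i j : ℕ) :
    ((j = 0 ∧ i = 0) ∨ (i = j + 1 ∧ Odd j) ∨ (j = i + 1 ∧ Odd i)) ↔ j = sigma19 i := by
  unfold sigma19
  simp only [Nat.odd_iff]
  split_ifs with h0 h1 <;> omega

lemma sigma19_lt {k i : ℕ} (hk : 1 ≤ k) (h : i < 2 * k + 1) : sigma19 i < 2 * k + 1 := by
  unfold sigma19
  simp only [Nat.odd_iff]
  split_ifs with h1 h2 <;> omega


set_option maxHeartbeats 1000000 in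
/-- Let `A` be the mod-2 cohomology algebra of a Demushkin pro-2 group
on `2k + 1` generators with invariant `q = 2`: a connected graded `F₂`-algebra with
`A_n = 0` for `n ≥ 3`, a basis `a_1, …, a_{2k+1}` of `A_1` (0-based: `a 0, …, a 2k`) and
a basis `{e}` of `A_2` with `a_1·a_1 = e`, `a_{2l}·a_{2l+1} = a_{2l+1}·a_{2l} = e` and
all other products of basis vectors zero.  Then (i) `(0) : a_i = ({a_j : j ≠ σ(i)})`;
(ii) for every nonempty `Y ⊆ {a_1, …, a_{2k+1}}` and every `a_i ∉ Y`,
`(Y) : a_i = A_+`, which is the left ideal generated by `{a_1, …, a_{2k+1}}`.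
In particular `A` is strongly Koszul with respect to `{a_1, …, a_{2k+1}}`. -/
theorem stmt19 {A : Type*} [Ring A] [Algebra (ZMod 2) A]
    (𝒜 : ℕ → Submodule (ZMod 2) A) [GradedAlgebra 𝒜]
    (hconn : 𝒜 0 = 1)
    (htop : ∀ n, 3 ≤ n → 𝒜 n = ⊥)
    (k : ℕ) (hk : 1 ≤ k)
    (a : Fin (2 * k + 1) → A) (ha1 : ∀ i, a i ∈ 𝒜 1)
    (hindep : LinearIndependent (ZMod 2) a)
    (hspan1 : Submodule.span (ZMod 2) (Set.range a) = 𝒜 1)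
    (e : A) (he2 : e ∈ 𝒜 2) (hene : e ≠ 0)
    (hspan2 : 𝒜 2 = Submodule.span (ZMod 2) {e})
    (hmul : ∀ i j : Fin (2 * k + 1), a i * a j =
      if (i : ℕ) = 0 ∧ (j : ℕ) = 0 then e
      else if ((j : ℕ) = (i : ℕ) + 1 ∧ Odd (i : ℕ))
            ∨ ((i : ℕ) = (j : ℕ) + 1 ∧ Odd (j : ℕ)) then e
      else 0) :
    (∀ i : Fin (2 * k + 1), colonIdeal (⊥ : Ideal A) (a i)
        = Ideal.span (a '' {j : Fin (2 * k + 1) | (j : ℕ) ≠ sigma19 (i : ℕ)}))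
    ∧ (∀ Y : Set A, Y ⊆ Set.range a → Y.Nonempty → ∀ i : Fin (2 * k + 1), a i ∉ Y →
        colonIdeal (Ideal.span Y) (a i) = augIdeal 𝒜)
    ∧ augIdeal 𝒜 = Ideal.span (Set.range a)
    ∧ StronglyKoszulWrt (augIdeal 𝒜) (Set.range a) := by
  classical
  -- basic facts
  have hzmod : ∀ c : ZMod 2, c = 0 ∨ c = 1 := by decide
  have hane : ∀ i, a i ≠ 0 := fun i => hindep.ne_zero i
  have hcolon : ∀ (I : Ideal A) (x y : A), y ∈ colonIdeal I x ↔ y * x ∈ I := by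
    intro I x y
    rfl
  -- decomposition of elements
  have hdecomp : ∀ x : A, ∃ c : ZMod 2, ∃ x1 ∈ 𝒜 1, ∃ x2 ∈ 𝒜 2,
      x = c • (1 : A) + x1 + x2 := by
    letI : ∀ (i : ℕ) (y : 𝒜 i), Decidable (y ≠ 0) := fun _ _ => Classical.dec _
    intro x
    have hsupp : (DirectSum.decompose 𝒜 x).support ⊆ ({0, 1, 2} : Finset ℕ) := by
      intro n hn
      rw [DFinsupp.mem_support_iff] at hn
      by_contra hmem
      simp only [Finset.mem_insert, Finset.mem_singleton] at hmem
      have h3 : 𝒜 n = ⊥ := htop n (by omega)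
      exact hn (Subtype.ext ((Submodule.eq_bot_iff _).1 h3 _ (DirectSum.decompose 𝒜 x n).2))
    have hzero : ∀ n ∈ ({0, 1, 2} : Finset ℕ), n ∉ (DirectSum.decompose 𝒜 x).support →
        ((DirectSum.decompose 𝒜 x n : 𝒜 n) : A) = 0 := by
      intro n _ hn
      rw [DFinsupp.notMem_support_iff] at hn
      rw [hn]
      rfl
    have hx : x = (DirectSum.decompose 𝒜 x 0 : A) + (DirectSum.decompose 𝒜 x 1 : A)
        + (DirectSum.decompose 𝒜 x 2 : A) := by
      have hs := DirectSum.sum_support_decompose 𝒜 x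
      rw [Finset.sum_subset hsupp hzero] at hs
      conv_lhs => rw [← hs]
      rw [Finset.sum_insert (by decide), Finset.sum_insert (by decide),
        Finset.sum_singleton, ← add_assoc]
    have h0 : (DirectSum.decompose 𝒜 x 0 : A) ∈ (1 : Submodule (ZMod 2) A) := by
      rw [← hconn]; exact (DirectSum.decompose 𝒜 x 0).2
    rw [Submodule.one_eq_range] at h0
    obtain ⟨c, hc⟩ := h0
    refine ⟨c, _, (DirectSum.decompose 𝒜 x 1).2, _, (DirectSum.decompose 𝒜 x 2).2, ?_⟩
    have hc1 : c • (1 : A) = (DirectSum.decompose 𝒜 x 0 : A) := by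
      rw [← hc]
      simp [Algebra.linearMap_apply, Algebra.algebraMap_eq_smul_one]
    rw [hc1]
    exact hx
  -- products of high degree vanish
  have hzero_mul : ∀ {m n : ℕ}, 3 ≤ m + n → ∀ u v : A, u ∈ 𝒜 m → v ∈ 𝒜 n → u * v = 0 := by
    intro m n hmn u v hu hv
    have h := SetLike.mul_mem_graded hu hv
    rw [htop _ hmn] at h
    exact (Submodule.mem_bot _).1 h
  -- structure of products in degree 1
  have hmul' : ∀ i j : Fin (2 * k + 1), a j * a i =
      if (j : ℕ) = sigma19 (i : ℕ) then e else 0 := by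
    intro i j
    rw [hmul j i]
    have key := sigma19_iff (i : ℕ) (j : ℕ)
    split_ifs with h1 h2 h3 h4 h5 <;> first | rfl | (exfalso; tauto)
  have hx1e : ∀ u ∈ 𝒜 1, ∀ i : Fin (2 * k + 1), ∃ d : ZMod 2, u * a i = d • e := by
    intro u hu i
    have h : u * a i ∈ 𝒜 2 := by
      simpa using SetLike.mul_mem_graded hu (ha1 i)
    rw [hspan2] at h
    obtain ⟨d, hd⟩ := Submodule.mem_span_singleton.1 h
    exact ⟨d, hd.symm⟩
  -- e is in any ideal generated by at least one of the a's
  have he_mem : ∀ (Y : Set A) (m : Fin (2 * k + 1)), a m ∈ Y → e ∈ Ideal.span Y := by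
    intro Y m hm
    have h1 : a ⟨sigma19 (m : ℕ), sigma19_lt hk m.isLt⟩ * a m = e := by
      rw [hmul' m ⟨sigma19 (m : ℕ), sigma19_lt hk m.isLt⟩, if_pos rfl]
    rw [← h1]
    exact Ideal.mul_mem_left _ _ (Ideal.subset_span hm)
  -- K-span is inside the ideal span
  have hKA : ∀ (S : Set A) (x : A), x ∈ Submodule.span (ZMod 2) S → x ∈ Ideal.span S := by
    intro S x hx
    refine Submodule.span_induction (fun y hy => Ideal.subset_span hy) (Submodule.zero_mem _)
      (fun y z _ _ hy hz => Submodule.add_mem _ hy hz) ?_ hx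
    intro c y _ hy
    exact Submodule.smul_of_tower_mem _ c hy
  -- the ideal generated by Y ⊆ range a as a K-span
  have hNmul : ∀ (Y : Set A), Y ⊆ Set.range a → ∀ (r x : A),
      x ∈ Submodule.span (ZMod 2) (Y ∪ {e}) → r * x ∈ Submodule.span (ZMod 2) (Y ∪ {e}) := by
    intro Y hY r x hx
    obtain ⟨c, r1, hr1, r2, hr2, hr⟩ := hdecomp r
    refine Submodule.span_induction ?_ ?_ ?_ ?_ hx
    · intro y hy
      have hre : ∀ z : A, z ∈ 𝒜 1 → r * z ∈ Submodule.span (ZMod 2) (Y ∪ {e}) →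
          True := fun _ _ _ => trivial
      rcases hy with hy | hy
      · obtain ⟨m, rfl⟩ := hY hy
        have h2 : r2 * a m = 0 := hzero_mul (by norm_num) _ _ hr2 (ha1 m)
        obtain ⟨d, hd⟩ := hx1e r1 hr1 m
        have : r * a m = c • a m + d • e := by
          rw [hr, add_mul, add_mul, smul_mul_assoc, one_mul, h2, add_zero, hd]
        rw [this]
        exact Submodule.add_mem _
          (Submodule.smul_mem _ _ (Submodule.subset_span (Set.mem_union_left _ hy)))
          (Submodule.smul_mem _ _ (Submodule.subset_span (Set.mem_union_right _ rfl)))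
      · rcases hy with rfl
        have h1 : r1 * y = 0 := hzero_mul (by norm_num) _ _ hr1 he2
        have h2 : r2 * y = 0 := hzero_mul (by norm_num) _ _ hr2 he2
        have : r * y = c • y := by
          rw [hr, add_mul, add_mul, smul_mul_assoc, one_mul, h1, h2, add_zero, add_zero]
        rw [this]
        exact Submodule.smul_mem _ _ (Submodule.subset_span (Set.mem_union_right _ rfl))
    · rw [mul_zero]; exact Submodule.zero_mem _
    · intro y z _ _ hy hz
      rw [mul_add]; exact Submodule.add_mem _ hy hz
    · intro d y _ hy
      rw [mul_smul_comm]; exact Submodule.smul_mem _ _ hy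
  have hIdealN : ∀ (Y : Set A), Y ⊆ Set.range a → ∀ x ∈ Ideal.span Y,
      x ∈ Submodule.span (ZMod 2) (Y ∪ {e}) := by
    intro Y hY x hx
    refine Submodule.span_induction
      (fun y hy => Submodule.subset_span (Set.mem_union_left _ hy))
      (Submodule.zero_mem _)
      (fun y z _ _ hy hz => Submodule.add_mem _ hy hz) ?_ hx
    intro r y _ hy
    rw [smul_eq_mul]
    exact hNmul Y hY r y hy
  -- degree 1 projection
  have hP1add : ∀ x y : A, ((DirectSum.decompose 𝒜 (x + y) 1 : 𝒜 1) : A)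
      = ((DirectSum.decompose 𝒜 x 1 : 𝒜 1) : A) + ((DirectSum.decompose 𝒜 y 1 : 𝒜 1) : A) := by
    intro x y
    rw [DirectSum.decompose_add]
    rfl
  have hP1smul : ∀ (c : ZMod 2) (x : A), ((DirectSum.decompose 𝒜 (c • x) 1 : 𝒜 1) : A)
      = c • ((DirectSum.decompose 𝒜 x 1 : 𝒜 1) : A) := by
    intro c x
    rw [DirectSum.decompose_smul]
    rfl
  have hP1e : ((DirectSum.decompose 𝒜 e 1 : 𝒜 1) : A) = 0 :=
    DirectSum.decompose_of_mem_ne 𝒜 he2 (by norm_num)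
  have hprojN : ∀ (Y : Set A), Y ⊆ Set.range a → ∀ x ∈ Submodule.span (ZMod 2) (Y ∪ {e}),
      ((DirectSum.decompose 𝒜 x 1 : 𝒜 1) : A) ∈ Submodule.span (ZMod 2) Y := by
    intro Y hY x hx
    refine Submodule.span_induction ?_ ?_ ?_ ?_ hx
    · intro y hy
      rcases hy with hy | hy
      · obtain ⟨m, rfl⟩ := hY hy
        rw [DirectSum.decompose_of_mem_same 𝒜 (ha1 m)]
        exact Submodule.subset_span hy
      · rcases hy with rfl
        rw [hP1e]
        exact Submodule.zero_mem _
    · rw [DirectSum.decompose_zero]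
      exact Submodule.zero_mem _
    · intro y z _ _ hy hz
      rw [hP1add]
      exact Submodule.add_mem _ hy hz
    · intro c y _ hy
      rw [hP1smul]
      exact Submodule.smul_mem _ _ hy
  -- if c • a i lies in the K-span of Y which misses a i, then c = 0
  have hc0 : ∀ (i : Fin (2 * k + 1)) (Y : Set A), Y ⊆ Set.range a → a i ∉ Y →
      ∀ c : ZMod 2, c • a i ∈ Submodule.span (ZMod 2) Y → c = 0 := by
    intro i Y hY hiY c hc
    rcases hzmod c with h | h
    · exact h
    exfalso
    rw [h, one_smul] at hc
    have hsub : Y ⊆ a '' {j : Fin (2 * k + 1) | j ≠ i} := by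
      intro y hy
      obtain ⟨m, rfl⟩ := hY hy
      refine ⟨m, ?_, rfl⟩
      intro hmi
      rw [hmi] at hy
      exact hiY hy
    have := Submodule.span_mono (R := ZMod 2) hsub hc
    exact hindep.notMem_span_image (by simp : i ∉ {j : Fin (2 * k + 1) | j ≠ i}) this
  -- multiplication formula
  have hxmul : ∀ (x : A) (i : Fin (2 * k + 1)), ∃ (c : ZMod 2)
      (f : Fin (2 * k + 1) → ZMod 2) (x2 : A), x2 ∈ 𝒜 2 ∧
      x = c • (1 : A) + (∑ j, f j • a j) + x2 ∧
      x * a i = c • a i + f ⟨sigma19 (i : ℕ), sigma19_lt hk i.isLt⟩ • e := by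
    intro x i
    obtain ⟨c, x1, hx1, x2, hx2, hx⟩ := hdecomp x
    rw [← hspan1] at hx1
    obtain ⟨f, hf⟩ := (Submodule.mem_span_range_iff_exists_fun (ZMod 2)).1 hx1
    set si : Fin (2 * k + 1) := ⟨sigma19 (i : ℕ), sigma19_lt hk i.isLt⟩ with hsi
    refine ⟨c, f, x2, hx2, by rw [hf]; exact hx, ?_⟩
    have h2 : x2 * a i = 0 := hzero_mul (by norm_num) _ _ hx2 (ha1 i)
    have h1 : x1 * a i = f si • e := by
      rw [← hf, Finset.sum_mul]
      have heach : ∀ j : Fin (2 * k + 1), (f j • a j) * a i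
          = if j = si then f si • e else 0 := by
        intro j
        rw [smul_mul_assoc, hmul' i j]
        by_cases h : j = si
        · subst h; simp [hsi]
        · rw [if_neg h, if_neg (by intro hv; exact h (Fin.ext hv)), smul_zero]
      rw [Finset.sum_congr rfl (fun j _ => heach j)]
      simp
    rw [hx, add_mul, add_mul, smul_mul_assoc, one_mul, h1, h2, add_zero]
  -- extraction of coefficients from c • a i + d • e
  have hext : ∀ (c d : ZMod 2) (i : Fin (2 * k + 1)),
      ((DirectSum.decompose 𝒜 (c • a i + d • e) 1 : 𝒜 1) : A) = c • a i := by
    intro c d i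
    rw [hP1add, hP1smul, hP1smul, hP1e, smul_zero, add_zero,
      DirectSum.decompose_of_mem_same 𝒜 (ha1 i)]
  have hext2 : ∀ (c d : ZMod 2) (i : Fin (2 * k + 1)),
      ((DirectSum.decompose 𝒜 (c • a i + d • e) 2 : 𝒜 2) : A) = d • e := by
    intro c d i
    have hadd : ∀ x y : A, ((DirectSum.decompose 𝒜 (x + y) 2 : 𝒜 2) : A)
        = ((DirectSum.decompose 𝒜 x 2 : 𝒜 2) : A)
          + ((DirectSum.decompose 𝒜 y 2 : 𝒜 2) : A) := by
      intro x y
      rw [DirectSum.decompose_add]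
      rfl
    have hsmul : ∀ (c : ZMod 2) (x : A), ((DirectSum.decompose 𝒜 (c • x) 2 : 𝒜 2) : A)
        = c • ((DirectSum.decompose 𝒜 x 2 : 𝒜 2) : A) := by
      intro c x
      rw [DirectSum.decompose_smul]
      rfl
    rw [hadd, hsmul, hsmul, DirectSum.decompose_of_mem_same 𝒜 he2,
      DirectSum.decompose_of_mem_ne 𝒜 (ha1 i) (by norm_num), smul_zero, zero_add]
  -- vanishing of c • a i + d • e forces c = d = 0
  have hvanish : ∀ (c d : ZMod 2) (i : Fin (2 * k + 1)),
      c • a i + d • e = 0 → c = 0 ∧ d = 0 := by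
    intro c d i h
    have h1 : c • a i = 0 := by
      have := hext c d i
      rw [h, DirectSum.decompose_zero] at this
      simpa using this.symm
    have h2 : d • e = 0 := by
      have := hext2 c d i
      rw [h, DirectSum.decompose_zero] at this
      simpa using this.symm
    constructor
    · rcases hzmod c with hc | hc
      · exact hc
      · rw [hc, one_smul] at h1; exact absurd h1 (hane i)
    · rcases hzmod d with hd | hd
      · exact hd
      · rw [hd, one_smul] at h2; exact absurd h2 hene
  -- e in the span of the a_j with j ≠ σ(i)
  have he_memS : ∀ i : Fin (2 * k + 1),
      e ∈ Ideal.span (a '' {j : Fin (2 * k + 1) | (j : ℕ) ≠ sigma19 (i : ℕ)}) := by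
    intro i
    by_cases h : sigma19 (i : ℕ) = 0
    · exact he_mem _ ⟨1, by omega⟩ ⟨⟨1, by omega⟩, by simp [h], rfl⟩
    · exact he_mem _ ⟨0, by omega⟩ ⟨⟨0, by omega⟩, by simpa using (Ne.symm h), rfl⟩
  -- `augIdeal = Ideal.span (range a)`
  have haug : augIdeal 𝒜 = Ideal.span (Set.range a) := by
    apply le_antisymm
    · rw [augIdeal, Ideal.span_le]
      intro y hy
      simp only [Set.mem_iUnion, SetLike.mem_coe] at hy
      obtain ⟨n, hn⟩ := hy
      match n with
      | 0 =>
        rw [← hspan1] at hn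
        exact hKA _ _ hn
      | 1 =>
        rw [hspan2] at hn
        obtain ⟨d, hd⟩ := Submodule.mem_span_singleton.1 hn
        rw [← hd]
        exact Submodule.smul_of_tower_mem _ d
          (he_mem _ ⟨0, by omega⟩ (Set.mem_range_self _))
      | (m + 2) =>
        have : y = 0 := (Submodule.eq_bot_iff _).1 (htop (m + 3) (by omega)) _ hn
        rw [this]
        exact Submodule.zero_mem _
    · rw [Ideal.span_le]
      intro y hy
      apply Ideal.subset_span
      simp only [Set.mem_iUnion, SetLike.mem_coe]
      obtain ⟨m, rfl⟩ := hy
      exact ⟨0, ha1 m⟩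
  -- membership of a i in the augmentation ideal
  have ha_aug : ∀ i, a i ∈ augIdeal 𝒜 := by
    intro i
    rw [haug]
    exact Ideal.subset_span (Set.mem_range_self _)
  -- Part (i)
  have part1 : ∀ i : Fin (2 * k + 1), colonIdeal (⊥ : Ideal A) (a i)
      = Ideal.span (a '' {j : Fin (2 * k + 1) | (j : ℕ) ≠ sigma19 (i : ℕ)}) := by
    intro i
    apply le_antisymm
    · intro x hx
      rw [hcolon, Submodule.mem_bot] at hx
      obtain ⟨c, f, x2, hx2, hxeq, hxmul'⟩ := hxmul x i
      rw [hx] at hxmul'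
      obtain ⟨hc, hf⟩ := hvanish _ _ _ hxmul'.symm
      rw [hxeq, hc, zero_smul, zero_add]
      refine Submodule.add_mem _ ?_ ?_
      · refine Submodule.sum_mem _ ?_
        intro j _
        by_cases hj : (j : ℕ) = sigma19 (i : ℕ)
        · have : j = (⟨sigma19 (i : ℕ), sigma19_lt hk i.isLt⟩ : Fin (2 * k + 1)) :=
            Fin.ext hj
          rw [this, hf, zero_smul]
          exact Submodule.zero_mem _
        · exact Submodule.smul_of_tower_mem _ _ (Ideal.subset_span ⟨j, hj, rfl⟩)
      · rw [hspan2] at hx2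
        obtain ⟨d, hd⟩ := Submodule.mem_span_singleton.1 hx2
        rw [← hd]
        exact Submodule.smul_of_tower_mem _ d (he_memS i)
    · rw [Ideal.span_le]
      rintro y ⟨j, hj, rfl⟩
      rw [SetLike.mem_coe, hcolon, Submodule.mem_bot, hmul' i j, if_neg hj]
  -- Part (ii)
  have part2 : ∀ Y : Set A, Y ⊆ Set.range a → Y.Nonempty → ∀ i : Fin (2 * k + 1), a i ∉ Y →
      colonIdeal (Ideal.span Y) (a i) = augIdeal 𝒜 := by
    intro Y hY hYne i hiY
    obtain ⟨y0, hy0⟩ := hYne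
    obtain ⟨m, rfl⟩ := hY hy0
    apply le_antisymm
    · intro x hx
      rw [hcolon] at hx
      obtain ⟨c, f, x2, hx2, hxeq, hxmul'⟩ := hxmul x i
      have hN := hIdealN Y hY _ hx
      rw [hxmul'] at hN
      have hp := hprojN Y hY _ hN
      rw [hext] at hp
      have hc : c = 0 := hc0 i Y hY hiY c hp
      rw [hxeq, hc, zero_smul, zero_add, haug]
      refine Submodule.add_mem _ ?_ ?_
      · refine Submodule.sum_mem _ ?_
        intro j _
        exact Submodule.smul_of_tower_mem _ _ (Ideal.subset_span (Set.mem_range_self _))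
      · rw [hspan2] at hx2
        obtain ⟨d, hd⟩ := Submodule.mem_span_singleton.1 hx2
        rw [← hd]
        exact Submodule.smul_of_tower_mem _ d (he_mem _ ⟨0, by omega⟩ (Set.mem_range_self _))
    · rw [haug, Ideal.span_le]
      rintro y ⟨j, rfl⟩
      rw [SetLike.mem_coe, hcolon, hmul' i j]
      by_cases hj : (j : ℕ) = sigma19 (i : ℕ)
      · rw [if_pos hj]
        exact he_mem Y m hy0
      · rw [if_neg hj]
        exact Submodule.zero_mem _
  refine ⟨part1, part2, haug, haug.symm, ?_, ?_⟩
  · -- minimality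
    intro Y hY hcon
    obtain ⟨z, hzX, hzY⟩ := Set.exists_of_ssubset hY
    obtain ⟨i, rfl⟩ := hzX
    have h1 : a i ∈ Ideal.span Y := by
      rw [hcon]
      exact ha_aug i
    have h2 := hIdealN Y hY.subset _ h1
    have h3 := hprojN Y hY.subset _ h2
    rw [DirectSum.decompose_of_mem_same 𝒜 (ha1 i)] at h3
    have h4 : (1 : ZMod 2) • a i ∈ Submodule.span (ZMod 2) Y := by
      rw [one_smul]; exact h3
    exact one_ne_zero (hc0 i Y hY.subset hzY 1 h4)
  · -- colon ideals generated by subsets of X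
    intro Y hY z hz
    obtain ⟨hzX, hzY⟩ := hz
    obtain ⟨i, rfl⟩ := hzX
    rcases Set.eq_empty_or_nonempty Y with rfl | hYne
    · refine ⟨a '' {j : Fin (2 * k + 1) | (j : ℕ) ≠ sigma19 (i : ℕ)},
        Set.image_subset_range _ _, ?_⟩
      rw [Ideal.span_empty]
      exact part1 i
    · exact ⟨Set.range a, subset_rfl, by rw [part2 Y hY.subset hYne i hzY, haug]⟩
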